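/- Let M = {p_{r₀}, p_{r₀+r}, p_{r₀+2r}, …} be an arithmetical list of primes of reason r > 1 (taking every r-th prime starting from the r₀-th). Then for Re(s) > 1 one has η₁(s) = r·η_M(s) + w(s), where η₁(s) = ∑_{p prime} p^{-s}, η_M(s) = ∑_{p ∈ M} p^{-s}, and w(s) is analytic on Re(s) > 0. -/

import Mathlib

open Complex

namespace Stmt10Aux

noncomputable def q (k : ℕ) : ℕ := Nat.nth Nat.Prime k

lemma infp : {p : ℕ | Nat.Prime p}.Infinite := Nat.infinite_setOf_prime

lemma q_prime (k : ℕ) : (q k).Prime := Nat.nth_mem_of_infinite infp k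

lemma two_le_q (k : ℕ) : 2 ≤ q k := (q_prime k).two_le

lemma q_strictMono : StrictMono q := fun _ _ h => (Nat.nth_lt_nth infp).2 h

lemma q_mono : Monotone q := q_strictMono.monotone

lemma add_two_le_q (k : ℕ) : k + 2 ≤ q k := by
  induction k with
  | zero => simpa using two_le_q 0
  | succ n ih => have h := q_strictMono (Nat.lt_succ_self n); simp only [Nat.succ_eq_add_one] at *; omega

lemma q_succ_le (k : ℕ) : q (k + 1) ≤ 2 * q k := by
  obtain ⟨p, pp, h1, h2⟩ :=
    Nat.exists_prime_lt_and_le_two_mul (q k) (q_prime k).pos.ne'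
  have hc : k + 1 ≤ Nat.count Nat.Prime p := by
    have h3 : Nat.count Nat.Prime (q k + 1) = k + 1 :=
      Nat.count_nth_succ_of_infinite infp k
    calc k + 1 = Nat.count Nat.Prime (q k + 1) := h3.symm
      _ ≤ Nat.count Nat.Prime p := Nat.count_monotone _ h1
  have h4 : q (k + 1) ≤ Nat.nth Nat.Prime (Nat.count Nat.Prime p) :=
    (Nat.nth_le_nth infp).2 hc
  rw [Nat.nth_count pp] at h4
  omega

lemma q_add_le (k j : ℕ) : q (k + j) ≤ 2 ^ j * q k := by
  induction j with
  | zero => simp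
  | succ n ih =>
      have := q_succ_le (k + n)
      calc q (k + (n+1)) = q ((k + n) + 1) := by ring_nf
        _ ≤ 2 * q (k + n) := q_succ_le (k + n)
        _ ≤ 2 * (2 ^ n * q k) := by omega
        _ = 2 ^ (n+1) * q k := by ring


/-- Mean value bound: `‖x^{-s} - y^{-s}‖ ≤ ‖s‖ · a^{-Re s - 1} · (y - x)` for `1 ≤ a ≤ x ≤ y`
and `0 ≤ Re s`. -/
lemma norm_cpow_diff_le (s : ℂ) (hs : 0 ≤ s.re) {a x y : ℝ} (ha : 1 ≤ a)
    (hax : a ≤ x) (hxy : x ≤ y) :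
    ‖(x:ℂ) ^ (-s) - (y:ℂ) ^ (-s)‖ ≤ (‖s‖ * a ^ (-s.re - 1)) * (y - x) := by
  have ha0 : (0:ℝ) < a := lt_of_lt_of_le one_pos ha
  have hderiv : ∀ t ∈ Set.Icc x y,
      HasDerivWithinAt (fun t : ℝ => (t:ℂ) ^ (-s)) (-s * (t:ℂ) ^ (-s - 1)) (Set.Icc x y) t := by
    intro t ht
    have ht0 : (0:ℝ) < t := lt_of_lt_of_le ha0 (hax.trans ht.1)
    have h1 : HasDerivAt (fun z : ℂ => z ^ (-s)) (-s * (t:ℂ) ^ (-s - 1) * 1) (t:ℂ) :=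
      (hasDerivAt_id (t:ℂ)).cpow_const (Complex.ofReal_mem_slitPlane.2 ht0)
    have h2 : HasDerivAt (fun t : ℝ => (t:ℂ) ^ (-s)) (-s * (t:ℂ) ^ (-s - 1) * 1) t :=
      h1.comp_ofReal
    simpa using h2.hasDerivWithinAt
  have hbound : ∀ t ∈ Set.Icc x y, ‖-s * (t:ℂ) ^ (-s - 1)‖ ≤ ‖s‖ * a ^ (-s.re - 1) := by
    intro t ht
    have ht0 : (0:ℝ) < t := lt_of_lt_of_le ha0 (hax.trans ht.1)
    rw [norm_mul, norm_neg]
    have h3 : ‖(t:ℂ) ^ (-s - 1)‖ = t ^ (-s.re - 1) := by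
      rw [Complex.norm_cpow_eq_rpow_re_of_pos ht0]
      norm_num
    rw [h3]
    have h4 : t ^ (-s.re - 1) ≤ a ^ (-s.re - 1) :=
      Real.rpow_le_rpow_of_nonpos ha0 (hax.trans ht.1) (by linarith)
    exact mul_le_mul_of_nonneg_left h4 (norm_nonneg s)
  have key := Convex.norm_image_sub_le_of_norm_hasDerivWithin_le hderiv hbound (convex_Icc x y)
    (Set.left_mem_Icc.2 hxy) (Set.right_mem_Icc.2 hxy)
  rw [norm_sub_rev] at key
  calc ‖(x:ℂ) ^ (-s) - (y:ℂ) ^ (-s)‖ ≤ (‖s‖ * a ^ (-s.re - 1)) * ‖y - x‖ := key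
    _ = (‖s‖ * a ^ (-s.re - 1)) * (y - x) := by
        rw [Real.norm_eq_abs, _root_.abs_of_nonneg (by linarith : (0:ℝ) ≤ y - x)]

/-- Lower mean value bound for real powers. -/
lemma rpow_sub_rpow_ge {ε a b : ℝ} (hε : 0 < ε) (ha : 0 < a) (hab : a ≤ b) :
    ε * (b - a) * b ^ (-ε - 1) ≤ a ^ (-ε) - b ^ (-ε) := by
  rcases eq_or_lt_of_le hab with rfl | h
  · simp
  have hb : 0 < b := ha.trans h
  have hcont : ContinuousOn (fun t : ℝ => t ^ (-ε)) (Set.Icc a b) := by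
    apply ContinuousOn.rpow_const continuousOn_id
    intro t ht
    exact Or.inl (ne_of_gt (lt_of_lt_of_le ha ht.1))
  have hderiv : ∀ t ∈ Set.Ioo a b,
      HasDerivAt (fun t : ℝ => t ^ (-ε)) ((-ε) * t ^ (-ε - 1)) t := fun t ht =>
    Real.hasDerivAt_rpow_const (Or.inl (ne_of_gt (ha.trans ht.1)))
  obtain ⟨c, hc, hceq⟩ := exists_hasDerivAt_eq_slope (fun t : ℝ => t ^ (-ε))
    (fun t => (-ε) * t ^ (-ε - 1)) h hcont hderiv
  have hc0 : 0 < c := ha.trans hc.1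
  have heq : a ^ (-ε) - b ^ (-ε) = ε * (b - a) * c ^ (-ε - 1) := by
    have hba : b - a ≠ 0 := by linarith
    field_simp at hceq
    nlinarith [hceq]
  rw [heq]
  have h5 : b ^ (-ε - 1) ≤ c ^ (-ε - 1) :=
    Real.rpow_le_rpow_of_nonpos hc0 hc.2.le (by linarith)
  have h6 : 0 ≤ ε * (b - a) := mul_nonneg hε.le (by linarith)
  nlinarith [h5, h6]


lemma summable_fst_real {f : ℕ → ℝ} (hf : Summable f) (hf0 : ∀ n, 0 ≤ f n) (r : ℕ) :
    Summable (fun p : ℕ × Fin r => f p.1) := by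
  rw [summable_prod_of_nonneg (fun p => hf0 p.1)]
  refine ⟨fun x => Summable.of_finite, ?_⟩
  have h : ∀ x : ℕ, (∑' _ : Fin r, f x) = (r : ℝ) * f x := by
    intro x
    rw [tsum_fintype]
    simp [Finset.sum_const, Finset.card_univ, nsmul_eq_mul]
  simpa only [h] using hf.mul_left (r : ℝ)

lemma summable_fst_complex {f : ℕ → ℂ} (hf : Summable f) (r : ℕ) :
    Summable (fun p : ℕ × Fin r => f p.1) := by
  have := summable_fst_real hf.norm (fun n => norm_nonneg _) r
  exact Summable.of_norm this

lemma summable_div_real {f : ℕ → ℝ} (hf : Summable f) (hf0 : ∀ n, 0 ≤ f n) {r : ℕ}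
    (hr : 0 < r) : Summable (fun m : ℕ => f (m / r)) := by
  haveI : NeZero r := ⟨hr.ne'⟩
  have h := summable_fst_real hf hf0 r
  have := (Nat.divModEquiv r).summable_iff (f := fun p : ℕ × Fin r => f p.1)
  exact this.2 h

lemma tsum_div_eq {f : ℕ → ℂ} (hf : Summable f) {r : ℕ} (hr : 0 < r) :
    (∑' m : ℕ, f (m / r)) = (r : ℂ) * ∑' n, f n := by
  haveI : NeZero r := ⟨hr.ne'⟩
  have h : Summable (fun p : ℕ × Fin r => f p.1) := summable_fst_complex hf r
  have he : (∑' m : ℕ, f (m / r)) = ∑' p : ℕ × Fin r, f p.1 :=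
    (Nat.divModEquiv r).tsum_eq (fun p : ℕ × Fin r => f p.1)
  rw [he, Summable.tsum_prod' h (fun b => Summable.of_finite)]
  have h2 : ∀ x : ℕ, (∑' _ : Fin r, f x) = (r : ℂ) * f x := by
    intro x
    rw [tsum_fintype]
    simp [Finset.sum_const, Finset.card_univ, nsmul_eq_mul]
  rw [tsum_congr h2, tsum_mul_left]


lemma norm_diff_block (s : ℂ) (hs : 0 ≤ s.re) {a B x y : ℝ} (ha : 1 ≤ a)
    (hax : a ≤ x) (hay : a ≤ y) (hxB : x ≤ B) (hyB : y ≤ B) :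
    ‖(x:ℂ) ^ (-s) - (y:ℂ) ^ (-s)‖ ≤ (‖s‖ * a ^ (-s.re - 1)) * (B - a) := by
  have hC : 0 ≤ ‖s‖ * a ^ (-s.re - 1) :=
    mul_nonneg (norm_nonneg _) (Real.rpow_nonneg (by linarith) _)
  rcases le_total x y with h | h
  · refine (norm_cpow_diff_le s hs ha hax h).trans ?_
    exact mul_le_mul_of_nonneg_left (by linarith) hC
  · rw [norm_sub_rev]
    refine (norm_cpow_diff_le s hs ha hay h).trans ?_
    exact mul_le_mul_of_nonneg_left (by linarith) hC

lemma gap_bound {ε a b c2 : ℝ} (hε : 0 < ε) (ha : 1 ≤ a) (hab : a ≤ b)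
    (hc : 0 < c2) (hbc : b ≤ c2 * a) :
    a ^ (-ε - 1) * (b - a) ≤ (c2 ^ (ε + 1) / ε) * (a ^ (-ε) - b ^ (-ε)) := by
  have ha0 : (0:ℝ) < a := by linarith
  have hb0 : (0:ℝ) < b := by linarith
  have h1 := rpow_sub_rpow_ge hε ha0 hab
  have h3 : (c2 * a) ^ (-ε - 1) ≤ b ^ (-ε - 1) :=
    Real.rpow_le_rpow_of_nonpos hb0 hbc (by linarith)
  have h4 : (c2 * a) ^ (-ε - 1) = c2 ^ (-ε - 1) * a ^ (-ε - 1) :=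
    Real.mul_rpow hc.le ha0.le
  have h5 : c2 ^ (ε + 1) * c2 ^ (-ε - 1) = 1 := by
    rw [← Real.rpow_add hc]
    norm_num
  have h2 : a ^ (-ε - 1) ≤ c2 ^ (ε + 1) * b ^ (-ε - 1) := by
    calc a ^ (-ε - 1) = c2 ^ (ε + 1) * (c2 ^ (-ε - 1) * a ^ (-ε - 1)) := by
          rw [← mul_assoc, h5, one_mul]
      _ = c2 ^ (ε + 1) * ((c2 * a) ^ (-ε - 1)) := by rw [h4]
      _ ≤ c2 ^ (ε + 1) * b ^ (-ε - 1) :=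
          mul_le_mul_of_nonneg_left h3 (Real.rpow_nonneg hc.le _)
  have hba : (0:ℝ) ≤ b - a := by linarith
  calc a ^ (-ε - 1) * (b - a) ≤ (c2 ^ (ε + 1) * b ^ (-ε - 1)) * (b - a) :=
        mul_le_mul_of_nonneg_right h2 hba
    _ = (c2 ^ (ε + 1) / ε) * (ε * (b - a) * b ^ (-ε - 1)) := by field_simp
    _ ≤ (c2 ^ (ε + 1) / ε) * (a ^ (-ε) - b ^ (-ε)) := by
        apply mul_le_mul_of_nonneg_left h1
        positivity

lemma summable_telescope {g : ℕ → ℝ} (hg : Antitone g) (hg0 : ∀ n, 0 ≤ g n) :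
    Summable (fun k => g k - g (k + 1)) := by
  apply summable_of_sum_range_le (c := g 0)
    (fun n => sub_nonneg.2 (hg (Nat.le_succ n)))
  intro n
  rw [Finset.sum_range_sub' g]
  linarith [hg0 n]

lemma summable_div_complex {f : ℕ → ℂ} (hf : Summable f) {r : ℕ} (hr : 0 < r) :
    Summable (fun m : ℕ => f (m / r)) := by
  haveI : NeZero r := ⟨hr.ne'⟩
  have h := summable_fst_complex hf r
  exact ((Nat.divModEquiv r).summable_iff (f := fun p : ℕ × Fin r => f p.1)).2 h

lemma summable_shift {σ : ℝ} (hσ : 1 < σ) :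
    Summable (fun m : ℕ => ((m : ℝ) + 2) ^ (-σ)) := by
  have h := Real.summable_nat_rpow.2 (by linarith : -σ < -1)
  have h2 := h.comp_injective (add_left_injective 2)
  refine h2.congr fun m => ?_
  simp only [Function.comp_apply]
  push_cast
  ring_nf

lemma summable_cpow_nth (s : ℂ) (hσ : 1 < s.re) {c : ℕ → ℕ} (hc : ∀ m, m + 2 ≤ c m) :
    Summable (fun m : ℕ => ((c m : ℕ) : ℂ) ^ (-s)) := by
  apply Summable.of_norm
  apply Summable.of_nonneg_of_le (fun m => norm_nonneg _) _ (summable_shift hσ)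
  intro m
  have hpos : 0 < c m := by have := hc m; omega
  rw [norm_natCast_cpow_of_pos hpos]
  have h1 : ((m : ℝ) + 2) ≤ (c m : ℝ) := by exact_mod_cast hc m
  have h2 : (0:ℝ) < (m : ℝ) + 2 := by positivity
  have := Real.rpow_le_rpow_of_nonpos h2 h1 (by simp [neg_re]; linarith : (-s).re ≤ 0)
  simpa [neg_re] using this


end Stmt10Aux

open Stmt10Aux

/-- for the arithmetical list `M = {p_{r₀}, p_{r₀+r}, …}` of reason `r > 1`
(every `r`-th prime starting from the `r₀`-th), one has, for `Re s > 1`,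
`η₁(s) = r·η_M(s) + w(s)` with `w` analytic on `Re s > 0`. -/
theorem stmt10 (r r₀ : ℕ) (hr : 1 < r) (hr₀ : 1 ≤ r₀) (hr₀r : r₀ ≤ r)
    (M : Set ℕ) (hMdef : M = {p : ℕ | ∃ n : ℕ, p = Nat.nth Nat.Prime (r₀ - 1 + n * r)}) :
    ∃ w : ℂ → ℂ,
      AnalyticOn ℂ w {s : ℂ | 0 < s.re} ∧
      ∀ s : ℂ, 1 < s.re →
        (∑' p : {p : ℕ | p.Prime}, ((p : ℕ) : ℂ) ^ (-s)) =
          (r : ℂ) * (∑' p : M, ((p : ℕ) : ℂ) ^ (-s)) + w s := by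
  subst hMdef
  have hr0 : 0 < r := by omega
  set b : ℕ → ℕ := fun m => r₀ - 1 + (m / r) * r with hb
  set F : ℕ → ℂ → ℂ :=
    fun m s => ((q m : ℕ) : ℂ) ^ (-s) - ((q (b m) : ℕ) : ℂ) ^ (-s) with hF
  -- basic index facts
  have hidx : ∀ m : ℕ, (m / r) * r ≤ m ∧ m ≤ (m / r + 1) * r ∧
      (m / r) * r ≤ b m ∧ b m ≤ (m / r + 1) * r := by
    intro m
    have h1 : (m / r) * r ≤ m := Nat.div_mul_le_self m r
    have h2 : m / r < m / r + 1 := Nat.lt_succ_self _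
    have h3 : m < (m / r + 1) * r := (Nat.div_lt_iff_lt_mul hr0).1 h2
    have h4 : (m / r + 1) * r = m / r * r + r := by ring
    simp only [hb]
    omega
  refine ⟨fun s => ∑' m, F m s, ?_, ?_⟩
  · -- analyticity
    have hopen : IsOpen {s : ℂ | 0 < s.re} :=
      isOpen_lt continuous_const Complex.continuous_re
    apply DifferentiableOn.analyticOn _ hopen
    intro s₀ hs₀
    have hs₀re : 0 < s₀.re := hs₀
    set ε : ℝ := s₀.re / 2 with hε
    have hεpos : 0 < ε := by positivity
    set R : ℝ := ‖s₀‖ + 1 with hR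
    set V : Set ℂ := {s : ℂ | ε < s.re} ∩ Metric.ball s₀ 1 with hV
    have hVopen : IsOpen V :=
      (isOpen_lt continuous_const Complex.continuous_re).inter Metric.isOpen_ball
    have hs₀V : s₀ ∈ V := by
      constructor
      · show ε < s₀.re
        rw [hε]; linarith
      · exact Metric.mem_ball_self one_pos
    have hVband : ∀ s ∈ V, ε ≤ s.re ∧ ‖s‖ ≤ R := by
      rintro s ⟨h1, h2⟩
      refine ⟨le_of_lt h1, ?_⟩
      have : ‖s - s₀‖ < 1 := by rwa [Metric.mem_ball, dist_eq_norm] at h2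
      calc ‖s‖ = ‖s₀ + (s - s₀)‖ := by ring_nf
        _ ≤ ‖s₀‖ + ‖s - s₀‖ := norm_add_le _ _
        _ ≤ ‖s₀‖ + 1 := by linarith
    set A : ℕ → ℝ := fun k => (q (k * r) : ℝ) with hA
    have hA1 : ∀ k, (2:ℝ) ≤ A k := fun k => by
      show (2:ℝ) ≤ ((q (k * r) : ℕ) : ℝ)
      exact_mod_cast two_le_q (k * r)
    have hAmono : Monotone A := fun i j h => by
      show ((q (i * r) : ℕ) : ℝ) ≤ ((q (j * r) : ℕ) : ℝ)
      exact_mod_cast q_mono (Nat.mul_le_mul_right r h)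
    have hAgap : ∀ k, A (k + 1) ≤ 2 ^ r * A k := by
      intro k
      have h := q_add_le (k * r) r
      show ((q ((k + 1) * r) : ℕ) : ℝ) ≤ 2 ^ r * ((q (k * r) : ℕ) : ℝ)
      have he : (k + 1) * r = k * r + r := by ring
      rw [he]
      exact_mod_cast h
    set C : ℝ := R * (((2:ℝ) ^ r) ^ (ε + 1) / ε) with hC
    have hCpos : 0 ≤ C := by positivity
    set u : ℕ → ℝ :=
      fun m => C * (A (m / r) ^ (-ε) - A (m / r + 1) ^ (-ε)) with hu
    have hganti : Antitone (fun k => A k ^ (-ε)) := by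
      intro i j h
      exact Real.rpow_le_rpow_of_nonpos (by linarith [hA1 i]) (hAmono h) (by linarith)
    have hgnonneg : ∀ k, 0 ≤ A k ^ (-ε) := fun k => Real.rpow_nonneg (by linarith [hA1 k]) _
    have husum : Summable u := by
      apply Summable.mul_left
      apply summable_div_real (summable_telescope hganti hgnonneg) _ hr0
      intro n
      exact sub_nonneg.2 (hganti (Nat.le_succ n))
    have hdiff : ∀ m : ℕ, DifferentiableOn ℂ (F m) V := by
      intro m
      apply DifferentiableOn.sub
      · apply Differentiable.differentiableOn
        apply Differentiable.const_cpow (differentiable_id.neg)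
        exact Or.inl (Nat.cast_ne_zero.2 (q_prime m).pos.ne')
      · apply Differentiable.differentiableOn
        apply Differentiable.const_cpow (differentiable_id.neg)
        exact Or.inl (Nat.cast_ne_zero.2 (q_prime (b m)).pos.ne')
    have hbound : ∀ (m : ℕ) (s : ℂ), s ∈ V → ‖F m s‖ ≤ u m := by
      intro m s hsV
      obtain ⟨hεs, hsR⟩ := hVband s hsV
      have hsre0 : 0 ≤ s.re := by linarith
      obtain ⟨h1, h2, h3, h4⟩ := hidx m
      set k := m / r
      have hax : A k ≤ (q m : ℝ) := by
        show ((q (k * r) : ℕ) : ℝ) ≤ _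
        exact_mod_cast q_mono h1
      have hay : A k ≤ (q (b m) : ℝ) := by
        show ((q (k * r) : ℕ) : ℝ) ≤ _
        exact_mod_cast q_mono h3
      have hxB : (q m : ℝ) ≤ A (k + 1) := by
        show _ ≤ ((q ((k + 1) * r) : ℕ) : ℝ)
        exact_mod_cast q_mono h2
      have hyB : (q (b m) : ℝ) ≤ A (k + 1) := by
        show _ ≤ ((q ((k + 1) * r) : ℕ) : ℝ)
        exact_mod_cast q_mono h4
      have hA1k : (1:ℝ) ≤ A k := by linarith [hA1 k]
      have step1 : ‖F m s‖ ≤ (‖s‖ * A k ^ (-s.re - 1)) * (A (k + 1) - A k) := by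
        have := norm_diff_block s hsre0 hA1k hax hay hxB hyB
        simpa [hF, Complex.ofReal_natCast] using this
      have step2 : A k ^ (-s.re - 1) ≤ A k ^ (-ε - 1) :=
        Real.rpow_le_rpow_of_exponent_le hA1k (by linarith)
      have step3 : A k ^ (-ε - 1) * (A (k + 1) - A k) ≤
          (((2:ℝ) ^ r) ^ (ε + 1) / ε) * (A k ^ (-ε) - A (k + 1) ^ (-ε)) :=
        gap_bound hεpos hA1k (hAmono (Nat.le_succ k)) (by positivity) (hAgap k)
      have hgapnn : (0:ℝ) ≤ A (k + 1) - A k := by linarith [hAmono (Nat.le_succ k)]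
      calc ‖F m s‖ ≤ (‖s‖ * A k ^ (-s.re - 1)) * (A (k + 1) - A k) := step1
        _ ≤ (R * A k ^ (-ε - 1)) * (A (k + 1) - A k) := by
            apply mul_le_mul_of_nonneg_right _ hgapnn
            apply mul_le_mul hsR step2 (Real.rpow_nonneg (by linarith) _) (by rw [hR]; positivity)
        _ = R * (A k ^ (-ε - 1) * (A (k + 1) - A k)) := by ring
        _ ≤ R * ((((2:ℝ) ^ r) ^ (ε + 1) / ε) * (A k ^ (-ε) - A (k + 1) ^ (-ε))) := by
            apply mul_le_mul_of_nonneg_left step3 (by positivity)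
        _ = u m := by rw [hu, hC]; ring
    have hDV : DifferentiableOn ℂ (fun s => ∑' m, F m s) V :=
      differentiableOn_tsum_of_summable_norm husum hdiff hVopen hbound
    exact (hDV.differentiableAt (hVopen.mem_nhds hs₀V)).differentiableWithinAt
  · -- the identity for Re s > 1
    intro s hσ
    have hbij1 : Function.Bijective
        (fun n : ℕ => (⟨q n, q_prime n⟩ : {p : ℕ | p.Prime})) := by
      constructor
      · intro a b h
        exact Nat.nth_injective infp (congrArg Subtype.val h)
      · rintro ⟨p, hp⟩
        exact ⟨Nat.count Nat.Prime p, Subtype.ext (Nat.nth_count hp)⟩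
    have hbij2 : Function.Bijective
        (fun n : ℕ => (⟨q (r₀ - 1 + n * r), ⟨n, rfl⟩⟩ :
          {p : ℕ | ∃ n : ℕ, p = Nat.nth Nat.Prime (r₀ - 1 + n * r)})) := by
      constructor
      · intro a c h
        have h2 : r₀ - 1 + a * r = r₀ - 1 + c * r :=
          Nat.nth_injective infp (congrArg Subtype.val h)
        have h3 : a * r = c * r := by omega
        exact Nat.eq_of_mul_eq_mul_right hr0 h3
      · rintro ⟨p, n, rfl⟩
        exact ⟨n, rfl⟩
    have hL : (∑' p : {p : ℕ | p.Prime}, ((p : ℕ) : ℂ) ^ (-s)) =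
        ∑' m : ℕ, ((q m : ℕ) : ℂ) ^ (-s) :=
      ((Equiv.ofBijective _ hbij1).tsum_eq
        (fun p : {p : ℕ | p.Prime} => ((p : ℕ) : ℂ) ^ (-s))).symm
    have hMsum : (∑' p : {p : ℕ | ∃ n : ℕ, p = Nat.nth Nat.Prime (r₀ - 1 + n * r)},
          ((p : ℕ) : ℂ) ^ (-s)) =
        ∑' n : ℕ, ((q (r₀ - 1 + n * r) : ℕ) : ℂ) ^ (-s) :=
      ((Equiv.ofBijective _ hbij2).tsum_eq
        (fun p : {p : ℕ | ∃ n : ℕ, p = Nat.nth Nat.Prime (r₀ - 1 + n * r)} =>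
          ((p : ℕ) : ℂ) ^ (-s))).symm
    have hQ : Summable (fun m : ℕ => ((q m : ℕ) : ℂ) ^ (-s)) :=
      summable_cpow_nth s hσ (fun m => add_two_le_q m)
    have hg : Summable (fun n : ℕ => ((q (r₀ - 1 + n * r) : ℕ) : ℂ) ^ (-s)) := by
      apply summable_cpow_nth s hσ
      intro m
      have h1 : m ≤ r₀ - 1 + m * r := by
        have : m * 1 ≤ m * r := Nat.mul_le_mul_left m (le_of_lt hr)
        omega
      have := add_two_le_q (r₀ - 1 + m * r)
      omega
    have hQb : Summable (fun m : ℕ => ((q (b m) : ℕ) : ℂ) ^ (-s)) :=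
      summable_div_complex hg hr0
    rw [hL, hMsum, ← tsum_div_eq hg hr0]
    have hsplit : (fun m : ℕ => ((q m : ℕ) : ℂ) ^ (-s)) =
        fun m => ((q (b m) : ℕ) : ℂ) ^ (-s) + F m s := by
      funext m
      simp only [hF]
      ring
    rw [hsplit, Summable.tsum_add hQb (hQ.sub hQb)]
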